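/- For any two ellipsoids E(p₁,Q₁) and E(p₂,Q₂) in ℝⁿ with symmetric positive definite shape matrices, and any constant c > 0, the Minkowski sum E(p₁,Q₁) ⊕ E(p₂,Q₂) is contained in the ellipsoid E(p₁+p₂, (1+c⁻¹)Q₁ + (1+c)Q₂). -/

import Mathlib

open Matrix Pointwise

lemma psd_quad_nonneg {n : ℕ} {A : Matrix (Fin n) (Fin n) ℝ} (hA : A.PosSemidef)
    (x : Fin n → ℝ) : 0 ≤ x ⬝ᵥ A *ᵥ x := by
  simpa using hA.dotProduct_mulVec_nonneg x

lemma cs_psd {n : ℕ} {A : Matrix (Fin n) (Fin n) ℝ} (hA : A.PosSemidef)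
    (v w : Fin n → ℝ) :
    (v ⬝ᵥ A *ᵥ w) ^ 2 ≤ (v ⬝ᵥ A *ᵥ v) * (w ⬝ᵥ A *ᵥ w) := by
  have hAt : Aᵀ = A := hA.isHermitian
  have hsym : ∀ x y : Fin n → ℝ, x ⬝ᵥ A *ᵥ y = y ⬝ᵥ A *ᵥ x := by
    intro x y
    rw [dotProduct_mulVec, ← mulVec_transpose, hAt, dotProduct_comm]
  have hquad : ∀ t : ℝ,
      0 ≤ (v ⬝ᵥ A *ᵥ v) * (t * t) + (2 * (v ⬝ᵥ A *ᵥ w)) * t + (w ⬝ᵥ A *ᵥ w) := by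
    intro t
    have h0 := psd_quad_nonneg hA (t • v + w)
    have hexp : (t • v + w) ⬝ᵥ A *ᵥ (t • v + w)
        = (v ⬝ᵥ A *ᵥ v) * (t * t) + (2 * (v ⬝ᵥ A *ᵥ w)) * t + (w ⬝ᵥ A *ᵥ w) := by
      simp [mulVec_add, mulVec_smul, dotProduct_add, add_dotProduct,
        smul_dotProduct, dotProduct_smul, smul_eq_mul, hsym w v]
      ring
    linarith [hexp ▸ h0]
  have hd : discrim (v ⬝ᵥ A *ᵥ v) (2 * (v ⬝ᵥ A *ᵥ w)) (w ⬝ᵥ A *ᵥ w) ≤ 0 :=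
    discrim_le_zero hquad
  rw [discrim] at hd
  nlinarith [hd]

lemma key_ineq {n : ℕ} {A B : Matrix (Fin n) (Fin n) ℝ} (hA : A.PosDef) (hB : B.PosDef)
    (a b : Fin n → ℝ) :
    (a + b) ⬝ᵥ (A + B)⁻¹ *ᵥ (a + b) ≤ a ⬝ᵥ A⁻¹ *ᵥ a + b ⬝ᵥ B⁻¹ *ᵥ b := by
  have hM : (A + B).PosDef := hA.add hB
  set v := (A + B)⁻¹ *ᵥ (a + b) with hv
  have hMv : (A + B) *ᵥ v = a + b := by
    rw [hv, mulVec_mulVec, Matrix.mul_nonsing_inv _ (isUnit_iff_ne_zero.2 hM.det_pos.ne'),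
      one_mulVec]
  have hAinv : A *ᵥ (A⁻¹ *ᵥ a) = a := by
    rw [mulVec_mulVec, Matrix.mul_nonsing_inv _ (isUnit_iff_ne_zero.2 hA.det_pos.ne'),
      one_mulVec]
  have hBinv : B *ᵥ (B⁻¹ *ᵥ b) = b := by
    rw [mulVec_mulVec, Matrix.mul_nonsing_inv _ (isUnit_iff_ne_zero.2 hB.det_pos.ne'),
      one_mulVec]
  set α := a ⬝ᵥ A⁻¹ *ᵥ a with hα
  set β := b ⬝ᵥ B⁻¹ *ᵥ b with hβ
  set P₁ := v ⬝ᵥ A *ᵥ v with hP₁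
  set P₂ := v ⬝ᵥ B *ᵥ v with hP₂
  have hP₁0 : 0 ≤ P₁ := psd_quad_nonneg hA.posSemidef v
  have hP₂0 : 0 ≤ P₂ := psd_quad_nonneg hB.posSemidef v
  have hs₁ : v ⬝ᵥ a = v ⬝ᵥ A *ᵥ (A⁻¹ *ᵥ a) := by rw [hAinv]
  have hs₂ : v ⬝ᵥ b = v ⬝ᵥ B *ᵥ (B⁻¹ *ᵥ b) := by rw [hBinv]
  have hαeq : (A⁻¹ *ᵥ a) ⬝ᵥ A *ᵥ (A⁻¹ *ᵥ a) = α := by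
    rw [hAinv, dotProduct_comm, hα]
  have hβeq : (B⁻¹ *ᵥ b) ⬝ᵥ B *ᵥ (B⁻¹ *ᵥ b) = β := by
    rw [hBinv, dotProduct_comm, hβ]
  have hcs₁ : (v ⬝ᵥ a) ^ 2 ≤ P₁ * α := by
    rw [hs₁, ← hαeq]; exact cs_psd hA.posSemidef v (A⁻¹ *ᵥ a)
  have hcs₂ : (v ⬝ᵥ b) ^ 2 ≤ P₂ * β := by
    rw [hs₂, ← hβeq]; exact cs_psd hB.posSemidef v (B⁻¹ *ᵥ b)
  have hα0 : 0 ≤ α := by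
    rw [← hαeq]; exact psd_quad_nonneg hA.posSemidef _
  have hβ0 : 0 ≤ β := by
    rw [← hβeq]; exact psd_quad_nonneg hB.posSemidef _
  have h1 : 2 * (v ⬝ᵥ a) ≤ P₁ + α := by nlinarith [sq_nonneg (P₁ - α)]
  have h2 : 2 * (v ⬝ᵥ b) ≤ P₂ + β := by nlinarith [sq_nonneg (P₂ - β)]
  have ht : (a + b) ⬝ᵥ v = P₁ + P₂ := by
    rw [hP₁, hP₂, ← dotProduct_add, ← add_mulVec, hMv, dotProduct_comm]
  have hsplit : (a + b) ⬝ᵥ v = v ⬝ᵥ a + v ⬝ᵥ b := by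
    rw [dotProduct_comm, dotProduct_add]
  show (a + b) ⬝ᵥ v ≤ α + β
  linarith [ht ▸ hsplit]

lemma posdef_smul {n : ℕ} {Q : Matrix (Fin n) (Fin n) ℝ} (hQ : Q.PosDef)
    {k : ℝ} (hk : 0 < k) : (k • Q).PosDef := by
  refine Matrix.PosDef.of_dotProduct_mulVec_pos ?_ (fun x hx => ?_)
  · rw [Matrix.IsHermitian, conjTranspose_smul, hQ.1.eq]
    simp
  · have := hQ.dotProduct_mulVec_pos hx
    rw [smul_mulVec, dotProduct_smul, smul_eq_mul]
    positivity

def ellipsoid {n : ℕ} (p : Fin n → ℝ) (Q : Matrix (Fin n) (Fin n) ℝ) :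
    Set (Fin n → ℝ) :=
  {x | (x - p) ⬝ᵥ Q⁻¹ *ᵥ (x - p) ≤ 1}

/-- The Minkowski sum of two ellipsoids is contained in the ellipsoid
`E(p₁+p₂, (1+c⁻¹)Q₁ + (1+c)Q₂)` for any `c > 0`. -/
theorem stmt_1 {n : ℕ} (p₁ p₂ : Fin n → ℝ) (Q₁ Q₂ : Matrix (Fin n) (Fin n) ℝ)
    (hQ₁ : Q₁.PosDef) (hQ₂ : Q₂.PosDef) (c : ℝ) (hc : 0 < c) :
    ellipsoid p₁ Q₁ + ellipsoid p₂ Q₂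
      ⊆ ellipsoid (p₁ + p₂) ((1 + c⁻¹) • Q₁ + (1 + c) • Q₂) := by
  intro x hx
  obtain ⟨a, ha, b, hb, rfl⟩ := hx
  have hk₁ : (0:ℝ) < 1 + c⁻¹ := by positivity
  have hk₂ : (0:ℝ) < 1 + c := by positivity
  have hA : ((1 + c⁻¹) • Q₁).PosDef := posdef_smul hQ₁ hk₁
  have hB : ((1 + c) • Q₂).PosDef := posdef_smul hQ₂ hk₂
  have hkey := key_ineq hA hB (a - p₁) (b - p₂)
  have hsub : a + b - (p₁ + p₂) = (a - p₁) + (b - p₂) := by abel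
  have hinv₁ : ((1 + c⁻¹) • Q₁)⁻¹ = (1 + c⁻¹)⁻¹ • Q₁⁻¹ := by
    have : Invertible (1 + c⁻¹) := invertibleOfNonzero hk₁.ne'
    rw [Matrix.inv_smul (A := Q₁) (1 + c⁻¹) (isUnit_iff_ne_zero.2 hQ₁.det_pos.ne'), invOf_eq_inv _]
  have hinv₂ : ((1 + c) • Q₂)⁻¹ = (1 + c)⁻¹ • Q₂⁻¹ := by
    have : Invertible (1 + c) := invertibleOfNonzero hk₂.ne'
    rw [Matrix.inv_smul (A := Q₂) (1 + c) (isUnit_iff_ne_zero.2 hQ₂.det_pos.ne'), invOf_eq_inv _]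
  have ha' : (a - p₁) ⬝ᵥ ((1 + c⁻¹) • Q₁)⁻¹ *ᵥ (a - p₁) ≤ (1 + c⁻¹)⁻¹ := by
    rw [hinv₁]
    simp only [smul_mulVec, dotProduct_smul, smul_eq_mul]
    have := ha
    rw [ellipsoid, Set.mem_setOf_eq] at this
    calc (1 + c⁻¹)⁻¹ * ((a - p₁) ⬝ᵥ Q₁⁻¹ *ᵥ (a - p₁)) ≤ (1 + c⁻¹)⁻¹ * 1 := by
          exact mul_le_mul_of_nonneg_left this (by positivity)
      _ = (1 + c⁻¹)⁻¹ := mul_one _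
  have hb' : (b - p₂) ⬝ᵥ ((1 + c) • Q₂)⁻¹ *ᵥ (b - p₂) ≤ (1 + c)⁻¹ := by
    rw [hinv₂]
    simp only [smul_mulVec, dotProduct_smul, smul_eq_mul]
    have := hb
    rw [ellipsoid, Set.mem_setOf_eq] at this
    calc (1 + c)⁻¹ * ((b - p₂) ⬝ᵥ Q₂⁻¹ *ᵥ (b - p₂)) ≤ (1 + c)⁻¹ * 1 := by
          exact mul_le_mul_of_nonneg_left this (by positivity)
      _ = (1 + c)⁻¹ := mul_one _
  have hsum : (1 + c⁻¹)⁻¹ + (1 + c)⁻¹ = 1 := by field_simp; ring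
  rw [ellipsoid, Set.mem_setOf_eq, hsub]
  calc ((a - p₁) + (b - p₂)) ⬝ᵥ ((1 + c⁻¹) • Q₁ + (1 + c) • Q₂)⁻¹ *ᵥ ((a - p₁) + (b - p₂))
      ≤ (a - p₁) ⬝ᵥ ((1 + c⁻¹) • Q₁)⁻¹ *ᵥ (a - p₁)
        + (b - p₂) ⬝ᵥ ((1 + c) • Q₂)⁻¹ *ᵥ (b - p₂) := hkey
    _ ≤ (1 + c⁻¹)⁻¹ + (1 + c)⁻¹ := add_le_add ha' hb'
    _ = 1 := hsum
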